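/- Let P1, λ12, λ13, λ23, N2, N3 be positive reals and define, for P2 > 0, R_CF(P2) = (1/2)·log(1 + P1·λ13/N3 + P1·P2·λ12·λ23/(P1·(λ13·N2 + λ12·N3) + P2·λ23·N2 + N2·N3)). Then: (a) R_CF is strictly increasing in P2 on (0, ∞); (b) R_CF(P2) < (1/2)·log(1 + P1·λ13/N3 + P1·λ12/N2) for every P2 > 0; and (c) R_CF(P2) → (1/2)·log(1 + P1·λ13/N3 + P1·λ12/N2) as P2 → ∞. -/

import Mathlib

/-- The compress-and-forward rate
`R_CF(P2) = (1/2)log(1 + P1λ13/N3 + P1P2λ12λ23/(P1(λ13N2 + λ12N3) + P2λ23N2 + N2N3))`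
is strictly increasing in `P2` on `(0, ∞)`, is strictly below the broadcast cut-set
bound `(1/2)log(1 + P1λ13/N3 + P1λ12/N2)` for every `P2 > 0`, and converges to that
bound as `P2 → ∞`. -/
theorem stmt7 (P1 lam12 lam13 lam23 N2 N3 : ℝ)
    (hP1 : 0 < P1) (hl12 : 0 < lam12) (hl13 : 0 < lam13) (hl23 : 0 < lam23)
    (hN2 : 0 < N2) (hN3 : 0 < N3) :
    StrictMonoOn (fun P2 : ℝ => (1 / 2) * Real.log (1 + P1 * lam13 / N3 +
        P1 * P2 * lam12 * lam23 /
          (P1 * (lam13 * N2 + lam12 * N3) + P2 * lam23 * N2 + N2 * N3)))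
      (Set.Ioi 0) ∧
    (∀ P2 : ℝ, 0 < P2 →
      (1 / 2) * Real.log (1 + P1 * lam13 / N3 +
          P1 * P2 * lam12 * lam23 /
            (P1 * (lam13 * N2 + lam12 * N3) + P2 * lam23 * N2 + N2 * N3))
        < (1 / 2) * Real.log (1 + P1 * lam13 / N3 + P1 * lam12 / N2)) ∧
    Filter.Tendsto (fun P2 : ℝ => (1 / 2) * Real.log (1 + P1 * lam13 / N3 +
        P1 * P2 * lam12 * lam23 /
          (P1 * (lam13 * N2 + lam12 * N3) + P2 * lam23 * N2 + N2 * N3)))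
      Filter.atTop
      (nhds ((1 / 2) * Real.log (1 + P1 * lam13 / N3 + P1 * lam12 / N2))) := by
  have hc0 : 0 < 1 + P1 * lam13 / N3 := by positivity
  have hD0 : 0 < P1 * (lam13 * N2 + lam12 * N3) + N2 * N3 := by positivity
  have hden : ∀ x : ℝ, 0 ≤ x →
      0 < P1 * (lam13 * N2 + lam12 * N3) + x * lam23 * N2 + N2 * N3 := by
    intro x hx
    have h2 : 0 ≤ x * lam23 * N2 := by positivity
    linarith
  have hfrac : ∀ x : ℝ, 0 < x →
      0 < P1 * x * lam12 * lam23 /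
        (P1 * (lam13 * N2 + lam12 * N3) + x * lam23 * N2 + N2 * N3) := by
    intro x hx
    exact div_pos (by positivity) (hden x hx.le)
  -- part (a)
  have hmono : StrictMonoOn (fun P2 : ℝ => (1 / 2) * Real.log (1 + P1 * lam13 / N3 +
      P1 * P2 * lam12 * lam23 /
        (P1 * (lam13 * N2 + lam12 * N3) + P2 * lam23 * N2 + N2 * N3))) (Set.Ioi 0) := by
    intro x hx y hy hxy
    simp only [Set.mem_Ioi] at hx hy
    have hfx := hfrac x hx
    have hfy := hfrac y hy
    have hlt : P1 * x * lam12 * lam23 /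
          (P1 * (lam13 * N2 + lam12 * N3) + x * lam23 * N2 + N2 * N3)
        < P1 * y * lam12 * lam23 /
          (P1 * (lam13 * N2 + lam12 * N3) + y * lam23 * N2 + N2 * N3) := by
      rw [div_lt_div_iff₀ (hden x hx.le) (hden y hy.le)]
      nlinarith [mul_pos (mul_pos (mul_pos (mul_pos hP1 hl12) hl23) hD0)
        (sub_pos.mpr hxy)]
    have hlog := Real.log_lt_log (by linarith) (add_lt_add_right hlt (1 + P1 * lam13 / N3))
    simp only []
    linarith
  -- the fraction is bounded by P1*lam12/N2
  have hbound : ∀ x : ℝ, 0 < x →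
      P1 * x * lam12 * lam23 /
        (P1 * (lam13 * N2 + lam12 * N3) + x * lam23 * N2 + N2 * N3) < P1 * lam12 / N2 := by
    intro x hx
    rw [div_lt_div_iff₀ (hden x hx.le) hN2]
    nlinarith [mul_pos (mul_pos hP1 hl12) hD0]
  have hlt : ∀ P2 : ℝ, 0 < P2 →
      (1 / 2) * Real.log (1 + P1 * lam13 / N3 + P1 * P2 * lam12 * lam23 /
        (P1 * (lam13 * N2 + lam12 * N3) + P2 * lam23 * N2 + N2 * N3))
      < (1 / 2) * Real.log (1 + P1 * lam13 / N3 + P1 * lam12 / N2) := by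
    intro x hx
    have hfx := hfrac x hx
    have hlog := Real.log_lt_log (by linarith)
      (add_lt_add_right (hbound x hx) (1 + P1 * lam13 / N3))
    linarith
  -- limit of the fraction
  have hlim : Filter.Tendsto (fun x : ℝ => P1 * x * lam12 * lam23 /
      (P1 * (lam13 * N2 + lam12 * N3) + x * lam23 * N2 + N2 * N3))
      Filter.atTop (nhds (P1 * lam12 / N2)) := by
    have h0 : Filter.Tendsto (fun x : ℝ =>
        (P1 * (lam13 * N2 + lam12 * N3) + N2 * N3) / x) Filter.atTop (nhds 0) :=
      tendsto_const_nhds.div_atTop Filter.tendsto_id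
    have h1 : Filter.Tendsto (fun x : ℝ =>
        (P1 * (lam13 * N2 + lam12 * N3) + N2 * N3) / x + lam23 * N2)
        Filter.atTop (nhds (lam23 * N2)) := by
      simpa using h0.add (tendsto_const_nhds (x := lam23 * N2))
    have h2 : Filter.Tendsto (fun x : ℝ => (P1 * lam12 * lam23) /
        ((P1 * (lam13 * N2 + lam12 * N3) + N2 * N3) / x + lam23 * N2))
        Filter.atTop (nhds ((P1 * lam12 * lam23) / (lam23 * N2))) :=
      Filter.Tendsto.div tendsto_const_nhds h1 (by positivity)
    have heq : (P1 * lam12 * lam23) / (lam23 * N2) = P1 * lam12 / N2 := by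
      field_simp
    rw [heq] at h2
    apply h2.congr'
    filter_upwards [Filter.eventually_gt_atTop 0] with x hx
    have hx0 : x ≠ 0 := ne_of_gt hx
    have hd1 : (0:ℝ) < (P1 * (lam13 * N2 + lam12 * N3) + N2 * N3) / x + lam23 * N2 :=
      add_pos (div_pos hD0 hx) (by positivity)
    field_simp
    ring
  have hcont : ContinuousAt (fun y : ℝ => (1 / 2) * Real.log (1 + P1 * lam13 / N3 + y))
      (P1 * lam12 / N2) := by
    have hpos : 1 + P1 * lam13 / N3 + P1 * lam12 / N2 ≠ 0 := by positivity
    exact continuousAt_const.mul ((Real.continuousAt_log hpos).comp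
      (continuousAt_const.add continuousAt_id))
  exact ⟨hmono, hlt, hcont.tendsto.comp hlim⟩
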